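/- For every real (n+2)×(n+2) matrix g, every t ∈ ℝ, every Y ∈ ℝⁿ and every real (m+2)×(m+2) matrix h: (a) q( diag(h, I_{n−m}) · g ) = q(g), where diag(h, I_{n−m}) denotes the block-diagonal (n+2)×(n+2) matrix with blocks h and the identity matrix of size n−m; (b) q( g · exp(tH) · exp(Ȳ) ) = e^{2t} q(g), where exp denotes the matrix exponential. -/

import Mathlib

noncomputable section

/-- The function `q(g) = ¼ ∑_{i=m+3}^{n+2} (g_{i,1} + g_{i,2})²` (matrix indices are
`0`-based in Lean, so the rows are those with index `≥ m+2` and the columns are `0`, `1`). -/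
def qform (n m : ℕ) (g : Matrix (Fin (n+2)) (Fin (n+2)) ℝ) : ℝ :=
  (1/4) * ∑ i ∈ Finset.univ.filter (fun i : Fin (n+2) => m+2 ≤ (i : ℕ)),
    (g i 0 + g i 1)^2

/-- The matrix `H` with `H_{1,2} = H_{2,1} = 1` and all other entries `0` (1-based). -/
def Hmat (n : ℕ) : Matrix (Fin (n+2)) (Fin (n+2)) ℝ :=
  fun i j => if ((i : ℕ) = 0 ∧ (j : ℕ) = 1) ∨ ((i : ℕ) = 1 ∧ (j : ℕ) = 0) then 1 else 0

/-- The matrix `Ȳ` associated to `Y ∈ ℝⁿ`: `Ȳ_{1,2+j} = Ȳ_{2,2+j} = Y_j`,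
`Ȳ_{2+j,1} = Y_j`, `Ȳ_{2+j,2} = -Y_j` (1-based), all other entries `0`. -/
def Ybar (n : ℕ) (Y : Fin n → ℝ) : Matrix (Fin (n+2)) (Fin (n+2)) ℝ :=
  fun i j =>
    if h1 : ((i : ℕ) = 0 ∨ (i : ℕ) = 1) ∧ 2 ≤ (j : ℕ) then
      Y ⟨(j : ℕ) - 2, by have := j.isLt; omega⟩
    else if h2 : 2 ≤ (i : ℕ) ∧ (j : ℕ) = 0 then
      Y ⟨(i : ℕ) - 2, by have := i.isLt; omega⟩
    else if h3 : 2 ≤ (i : ℕ) ∧ (j : ℕ) = 1 then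
      -(Y ⟨(i : ℕ) - 2, by have := i.isLt; omega⟩)
    else 0

/-- The block diagonal matrix `diag(h, I_{n-m})` of size `(n+2) × (n+2)` with upper left
block `h` of size `(m+2) × (m+2)`. -/
def blockEmbed (n m : ℕ) (h : Matrix (Fin (m+2)) (Fin (m+2)) ℝ) :
    Matrix (Fin (n+2)) (Fin (n+2)) ℝ :=
  fun i j =>
    if hi : (i : ℕ) < m+2 then
      if hj : (j : ℕ) < m+2 then h ⟨(i : ℕ), hi⟩ ⟨(j : ℕ), hj⟩ else 0
    else if (i : ℕ) = (j : ℕ) then 1 else 0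

open Matrix

def mulVecL {N : ℕ} (v : Fin N → ℝ) :
    Matrix (Fin N) (Fin N) ℝ →ₗ[ℝ] (Fin N → ℝ) where
  toFun M := M *ᵥ v
  map_add' A B := Matrix.add_mulVec A B v
  map_smul' c A := Matrix.smul_mulVec c A v

theorem exp_mulVec_eigen {N : ℕ} (A : Matrix (Fin N) (Fin N) ℝ) (v : Fin N → ℝ) (c : ℝ)
    (h : A *ᵥ v = c • v) : NormedSpace.exp A *ᵥ v = Real.exp c • v := by
  letI : SeminormedRing (Matrix (Fin N) (Fin N) ℝ) := Matrix.linftyOpSemiNormedRing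
  letI : NormedRing (Matrix (Fin N) (Fin N) ℝ) := Matrix.linftyOpNormedRing
  letI : NormedAlgebra ℝ (Matrix (Fin N) (Fin N) ℝ) := Matrix.linftyOpNormedAlgebra
  have hpow : ∀ k : ℕ, A ^ k *ᵥ v = c ^ k • v := by
    intro k
    induction k with
    | zero => simp
    | succ k ih =>
        rw [pow_succ, pow_succ, ← Matrix.mulVec_mulVec, h, Matrix.mulVec_smul, ih,
          smul_smul, mul_comm]
  have hsum : Summable fun k : ℕ => ((k.factorial : ℝ))⁻¹ • A ^ k :=
    NormedSpace.expSeries_summable' (𝕂 := ℝ) A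
  calc NormedSpace.exp A *ᵥ v
      = (LinearMap.toContinuousLinearMap (mulVecL (N := N) v)) (NormedSpace.exp A) := rfl
    _ = ∑' k : ℕ, (LinearMap.toContinuousLinearMap (mulVecL (N := N) v))
          (((k.factorial : ℝ))⁻¹ • A ^ k) := by
        rw [NormedSpace.exp_eq_tsum (𝕂 := ℝ)]
        exact (LinearMap.toContinuousLinearMap (mulVecL (N := N) v)).map_tsum hsum
    _ = ∑' k : ℕ, (((k.factorial : ℝ))⁻¹ * c ^ k) • v := by
        congr 1; funext k
        show mulVecL v (((k.factorial : ℝ))⁻¹ • A ^ k) = _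
        rw [_root_.map_smul]
        show ((k.factorial : ℝ))⁻¹ • ((A ^ k) *ᵥ v) = _
        rw [hpow k, smul_smul]
    _ = (∑' k : ℕ, ((k.factorial : ℝ))⁻¹ * c ^ k) • v := by
        rw [Summable.tsum_smul_const]
        exact NormedSpace.expSeries_summable' (𝕂 := ℝ) c
    _ = Real.exp c • v := by
        congr 1
        rw [Real.exp_eq_exp_ℝ, NormedSpace.exp_eq_tsum (𝕂 := ℝ)]
        simp [smul_eq_mul]

/-- the vector `e₀ + e₁` -/
def vv (n : ℕ) : Fin (n+2) → ℝ := fun j => if (j : ℕ) < 2 then 1 else 0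

lemma mulVec_vv {n : ℕ} (M : Matrix (Fin (n+2)) (Fin (n+2)) ℝ) (i : Fin (n+2)) :
    (M *ᵥ vv n) i = M i 0 + M i 1 := by
  show ∑ j, M i j * vv n j = M i 0 + M i 1
  rw [Fin.sum_univ_succ, Fin.sum_univ_succ]
  have h0 : vv n 0 = 1 := rfl
  have h1 : vv n (Fin.succ 0) = 1 := rfl
  have h2 : ∀ j : Fin n, vv n (Fin.succ (Fin.succ j)) = 0 := by
    intro j; simp [vv]
  simp only [h0, h1, h2, mul_one, mul_zero, Finset.sum_const_zero, add_zero]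
  rfl

lemma Hmat_vv (n : ℕ) : Hmat n *ᵥ vv n = vv n := by
  ext i
  rw [mulVec_vv]
  rcases Nat.lt_or_ge (i : ℕ) 2 with hi | hi
  · have : (i : ℕ) = 0 ∨ (i : ℕ) = 1 := by omega
    rcases this with h | h <;> simp [Hmat, vv, h, Fin.val_zero, Fin.val_one]
  · have h0 : (i : ℕ) ≠ 0 := by omega
    have h1 : (i : ℕ) ≠ 1 := by omega
    simp [Hmat, vv, h0, h1, Nat.not_lt.2 hi, Fin.val_zero, Fin.val_one]

lemma Ybar_vv (n : ℕ) (Y : Fin n → ℝ) : Ybar n Y *ᵥ vv n = (0 : ℝ) • vv n := by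
  ext i
  rw [mulVec_vv]
  have c0 : ((0 : Fin (n+2)) : ℕ) = 0 := rfl
  have c1 : ((1 : Fin (n+2)) : ℕ) = 1 := rfl
  rcases Nat.lt_or_ge (i : ℕ) 2 with hi | hi
  · have : Ybar n Y i 0 = 0 := by
      simp only [Ybar, c0]; rw [dif_neg (by omega), dif_neg (by omega), dif_neg (by omega)]
    have h1 : Ybar n Y i 1 = 0 := by
      simp only [Ybar, c1]; rw [dif_neg (by omega), dif_neg (by omega), dif_neg (by omega)]
    simp [this, h1, vv]
  · have : Ybar n Y i 0 = Y ⟨(i:ℕ)-2, by have := i.isLt; omega⟩ := by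
      simp only [Ybar, c0]; rw [dif_neg (by omega), dif_pos ⟨hi, trivial⟩]
    have h1 : Ybar n Y i 1 = -Y ⟨(i:ℕ)-2, by have := i.isLt; omega⟩ := by
      simp only [Ybar, c1]; rw [dif_neg (by omega), dif_neg (by omega), dif_pos ⟨hi, trivial⟩]
    simp [this, h1, vv]


/-- (a) `q(diag(h, I_{n-m})·g) = q(g)`;
(b) `q(g·exp(tH)·exp(Ȳ)) = e^{2t} q(g)`. -/
theorem qformInvariance (n m : ℕ) (hn : 1 ≤ n) (hm : m < n)
    (g : Matrix (Fin (n+2)) (Fin (n+2)) ℝ) (t : ℝ) (Y : Fin n → ℝ)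
    (h : Matrix (Fin (m+2)) (Fin (m+2)) ℝ) :
    qform n m (blockEmbed n m h * g) = qform n m g ∧
    qform n m (g * NormedSpace.exp (t • Hmat n) * NormedSpace.exp (Ybar n Y))
      = Real.exp (2*t) * qform n m g := by
  constructor
  · unfold qform
    congr 1
    refine Finset.sum_congr rfl fun i hi => ?_
    have hi' : m + 2 ≤ (i : ℕ) := (Finset.mem_filter.mp hi).2
    have key : ∀ k, (blockEmbed n m h * g) i k = g i k := by
      intro k
      rw [Matrix.mul_apply]
      rw [Finset.sum_eq_single i]
      · simp [blockEmbed, Nat.not_lt.2 hi']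
      · intro b _ hb
        have : (i : ℕ) ≠ (b : ℕ) := fun hc => hb.symm (Fin.ext hc)
        simp [blockEmbed, Nat.not_lt.2 hi', this]
      · intro hc; exact absurd (Finset.mem_univ i) hc
    rw [key 0, key 1]
  · have hE : NormedSpace.exp (t • Hmat n) *ᵥ vv n = Real.exp t • vv n := by
      refine exp_mulVec_eigen _ _ t ?_
      rw [Matrix.smul_mulVec, Hmat_vv]
    have hF : NormedSpace.exp (Ybar n Y) *ᵥ vv n = vv n := by
      have := exp_mulVec_eigen (Ybar n Y) (vv n) 0 (Ybar_vv n Y)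
      simpa using this
    have key : ∀ i : Fin (n+2),
        (g * NormedSpace.exp (t • Hmat n) * NormedSpace.exp (Ybar n Y)) i 0 +
        (g * NormedSpace.exp (t • Hmat n) * NormedSpace.exp (Ybar n Y)) i 1
        = Real.exp t * (g i 0 + g i 1) := by
      intro i
      rw [← mulVec_vv]
      rw [← Matrix.mulVec_mulVec, ← Matrix.mulVec_mulVec, hF, hE, Matrix.mulVec_smul]
      simp [mulVec_vv, smul_eq_mul]
    have hsum : ∑ i ∈ Finset.univ.filter (fun i : Fin (n+2) => m+2 ≤ (i : ℕ)),
        ((g * NormedSpace.exp (t • Hmat n) * NormedSpace.exp (Ybar n Y)) i 0 +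
         (g * NormedSpace.exp (t • Hmat n) * NormedSpace.exp (Ybar n Y)) i 1) ^ 2
        = Real.exp (2*t) * ∑ i ∈ Finset.univ.filter (fun i : Fin (n+2) => m+2 ≤ (i : ℕ)),
          (g i 0 + g i 1) ^ 2 := by
      rw [Finset.mul_sum]
      refine Finset.sum_congr rfl fun i _ => ?_
      rw [key i, two_mul, Real.exp_add]
      ring
    unfold qform
    rw [hsum]
    ring
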